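/- For every n ≥ 1, every subset H ⊆ P satisfying condition (H1) in the incidence geometry G_n is of the form C_p = {x ∈ P : ⟨p,x⟩ = 0} or of the form H_p = {x ∈ P : Q_p(x) = 0} for some p ∈ V_n. -/

import Mathlib

/-- The symplectic vector space `V_n = (ZMod 2)^(2n)` of the n-qubit real Pauli group. -/
abbrev V (n : ℕ) : Type := Fin (2 * n) → ZMod 2

/-- The index `2i-1` (0-based: `2i`). -/
def i0 {n : ℕ} (i : Fin n) : Fin (2 * n) := ⟨2 * i.1, by have := i.isLt; omega⟩

/-- The index `2i` (0-based: `2i+1`). -/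
def i1 {n : ℕ} (i : Fin n) : Fin (2 * n) := ⟨2 * i.1 + 1, by have := i.isLt; omega⟩

/-- The symplectic form `⟨x,y⟩ = Σ_{i=1}^n (x_{2i−1} y_{2i} + x_{2i} y_{2i−1})`. -/
def sform {n : ℕ} (x y : V n) : ZMod 2 :=
  ∑ i : Fin n, (x (i0 i) * y (i1 i) + x (i1 i) * y (i0 i))

/-- The point set `P = V_n \ {0}` of the incidence geometry `G_n`. -/
def P (n : ℕ) : Set (V n) := {x | x ≠ 0}

/-- The line set `L = {{a,b,a+b} : a,b ∈ P, a ≠ b, ⟨a,b⟩ = 0}` of `G_n`. -/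
def Lines (n : ℕ) : Set (Set (V n)) :=
  {l | ∃ a b : V n, a ∈ P n ∧ b ∈ P n ∧ a ≠ b ∧ sform a b = 0 ∧ l = {a, b, a + b}}

/-- A subset `H ⊆ P` satisfies condition (H1) if every line meets it in exactly
one point or is contained in it. -/
def IsH1 {n : ℕ} (H : Set (V n)) : Prop :=
  H ⊆ P n ∧ ∀ l ∈ Lines n, (H ∩ l).ncard = 1 ∨ l ⊆ H

/-- A geometric hyperplane: a subset satisfying (H1) which is not the full point set. -/
def IsHyperplane {n : ℕ} (H : Set (V n)) : Prop := IsH1 H ∧ H ≠ P n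

/-- `A ⊞ B`: the complement in `P` of the symmetric difference of `A` and `B`. -/
def boxAdd {n : ℕ} (A B : Set (V n)) : Set (V n) := P n \ (symmDiff A B)

/-- The quadratic form `Q_0(x) = Σ_{i=1}^n x_{2i−1} x_{2i}`. -/
def Q0 {n : ℕ} (x : V n) : ZMod 2 := ∑ i : Fin n, x (i0 i) * x (i1 i)

/-- The quadratic form `Q_p(x) = Q_0(x) + ⟨p,x⟩`. -/
def Qf {n : ℕ} (p x : V n) : ZMod 2 := Q0 x + sform p x

/-- The perp-set hyperplane `C_p = {x ∈ P : ⟨p,x⟩ = 0}`. -/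
def Cset {n : ℕ} (p : V n) : Set (V n) := {x ∈ P n | sform p x = 0}

/-- The quadric hyperplane `H_p = {x ∈ P : Q_p(x) = 0}`. -/
def Hset {n : ℕ} (p : V n) : Set (V n) := {x ∈ P n | Qf p x = 0}

/-- The symplectic transvection `t_p : x ↦ x + ⟨p,x⟩·p`. -/
def tv {n : ℕ} (p : V n) (x : V n) : V n := x + sform p x • p



section Aux

-- basic ZMod 2 facts
lemma z2cases (z : ZMod 2) : z = 0 ∨ z = 1 := by revert z; decide

lemma addV_self {n : ℕ} (x : V n) : x + x = 0 := by
  funext j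
  have : ∀ z : ZMod 2, z + z = 0 := by decide
  exact this (x j)

lemma sform_comm {n : ℕ} (a b : V n) : sform a b = sform b a := by
  unfold sform; refine Finset.sum_congr rfl fun i _ => ?_; ring

lemma sform_self {n : ℕ} (a : V n) : sform a a = 0 := by
  unfold sform
  have : ∀ x y : ZMod 2, x * y + y * x = 0 := by decide
  simp [this]

lemma sform_add_left {n : ℕ} (a b c : V n) :
    sform (a + b) c = sform a c + sform b c := by
  unfold sform
  rw [← Finset.sum_add_distrib]
  refine Finset.sum_congr rfl fun i _ => ?_
  simp only [Pi.add_apply]; ring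

lemma sform_add_right {n : ℕ} (a b c : V n) :
    sform a (b + c) = sform a b + sform a c := by
  rw [sform_comm, sform_add_left, sform_comm b a, sform_comm c a]

lemma Q0_add {n : ℕ} (a b : V n) : Q0 (a + b) = Q0 a + Q0 b + sform a b := by
  unfold Q0 sform
  rw [← Finset.sum_add_distrib, ← Finset.sum_add_distrib]
  refine Finset.sum_congr rfl fun i _ => ?_
  simp only [Pi.add_apply]; ring

lemma sum_pair {n : ℕ} (F : Fin (2 * n) → ZMod 2) :
    ∑ j, F j = ∑ i : Fin n, (F (i0 i) + F (i1 i)) := by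
  have hbij : Function.Bijective
      (fun p : Fin n × Fin 2 => (⟨2 * p.1.1 + p.2.1, by omega⟩ : Fin (2 * n))) := by
    rw [Fintype.bijective_iff_injective_and_card]
    constructor
    · rintro ⟨⟨i, hi⟩, ⟨k, hk⟩⟩ ⟨⟨i', hi'⟩, ⟨k', hk'⟩⟩ h
      simp only [Fin.mk.injEq] at h
      simp only [Prod.mk.injEq, Fin.mk.injEq]
      omega
    · simp [mul_comm]
  have := Fintype.sum_bijective _ hbij
    (fun p : Fin n × Fin 2 => F ⟨2 * p.1.1 + p.2.1, by omega⟩) F (fun p => rfl)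
  rw [← this, Fintype.sum_prod_type]
  refine Finset.sum_congr rfl fun i _ => ?_
  rw [Fin.sum_univ_two]
  congr 1

/-- index swap within a pair -/
def sw {n : ℕ} (j : Fin (2 * n)) : Fin (2 * n) :=
  ⟨if j.1 % 2 = 0 then j.1 + 1 else j.1 - 1, by have := j.isLt; split <;> omega⟩

lemma sw_i0 {n : ℕ} (i : Fin n) : sw (i0 i) = i1 i := by
  rw [Fin.ext_iff]; unfold sw; dsimp only; split <;> simp only [i0, i1] at * <;> omega

lemma sw_i1 {n : ℕ} (i : Fin n) : sw (i1 i) = i0 i := by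
  rw [Fin.ext_iff]; unfold sw; dsimp only; split <;> simp only [i0, i1] at * <;> omega

lemma linear_rep {n : ℕ} (h : V n → ZMod 2) (hadd : ∀ x y, h (x + y) = h x + h y) :
    ∃ p : V n, ∀ x, h x = sform p x := by
  classical
  set φ : V n →+ ZMod 2 := AddMonoidHom.mk' h hadd with hφ
  refine ⟨fun j => h (Pi.single (sw j) 1), fun x => ?_⟩
  have hx : h x = ∑ j, x j * h (Pi.single j 1) := by
    conv_lhs => rw [← Finset.univ_sum_single x]
    rw [show h = φ from rfl, map_sum]
    refine Finset.sum_congr rfl fun j _ => ?_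
    rcases z2cases (x j) with h0 | h1
    · rw [h0, Pi.single_zero, map_zero φ, zero_mul]
    · rw [h1]; simp
  rw [hx, sum_pair (fun j => x j * h (Pi.single j 1))]
  unfold sform
  refine Finset.sum_congr rfl fun i _ => ?_
  dsimp only
  rw [sw_i0, sw_i1]
  ring

/-- polarization defect of `g` -/
def Bg {n : ℕ} (g : V n → ZMod 2) (a b : V n) : ZMod 2 := g a + g b + g (a + b)

section Bstuff
variable {n : ℕ} (g : V n → ZMod 2)
    (gadd : ∀ a b : V n, sform a b = 0 → g (a + b) = g a + g b)

lemma Bsym (a b : V n) : Bg g a b = Bg g b a := by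
  unfold Bg; rw [add_comm a b]; ring

lemma Bshift (a b : V n) : Bg g a (a + b) = Bg g a b := by
  unfold Bg
  rw [← add_assoc, addV_self, zero_add]
  ring

include gadd

lemma L1 {a b c : V n} (hac : sform a c = 0) (hbc : sform b c = 0) :
    Bg g a (b + c) = Bg g a b := by
  have h1 : g (b + c) = g b + g c := gadd _ _ hbc
  have h2 : a + (b + c) = a + b + c := (add_assoc a b c).symm
  have h3 : g (a + b + c) = g (a + b) + g c :=
    gadd _ _ (by rw [sform_add_left, hac, hbc, add_zero])
  unfold Bg
  rw [h1, h2, h3]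
  have : ∀ u v w t : ZMod 2, u + (v + w) + (t + w) = u + v + t := by decide
  exact this _ _ _ _

lemma L2 {a b c : V n} (hac : sform a c = 0) (hb : sform a b = sform c b) :
    Bg g a (b + c) = Bg g b c := by
  have h2 : a + (b + c) = a + c + b := by rw [add_comm b c, ← add_assoc]
  have hs : sform (a + c) b = 0 := by
    rw [sform_add_left, hb]
    have : ∀ z : ZMod 2, z + z = 0 := by decide
    exact this _
  have h3 : g (a + c + b) = g a + g c + g b := by
    rw [gadd _ _ hs, gadd _ _ hac]
  unfold Bg
  rw [h2, h3]
  have : ∀ u v w t : ZMod 2, u + v + (u + w + t) = t + w + v := by decide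
  exact this _ _ _ _

lemma Bshared {a b b' : V n} (h1 : sform a b = 1) (h2 : sform a b' = 1) :
    Bg g a b = Bg g a b' := by
  have z11 : (1 : ZMod 2) + 1 = 0 := by decide
  rcases z2cases (sform b b') with hbb | hbb
  · have hac : sform a (b + b') = 0 := by rw [sform_add_right, h1, h2, z11]
    have hbc : sform b (b + b') = 0 := by
      rw [sform_add_right, sform_self, hbb, add_zero]
    have := L1 g gadd hac hbc
    rw [show b + (b + b') = b' by rw [← add_assoc, addV_self, zero_add]] at this
    exact this.symm
  · set d : V n := a + (b + b') with hd
    have had : sform a d = 0 := by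
      rw [hd, sform_add_right, sform_add_right, sform_self, h1, h2, z11]; decide
    have hbd : sform b d = 0 := by
      rw [hd, sform_add_right, sform_add_right, sform_self,
        sform_comm b a, h1, hbb]; decide
    have hb'd : sform b' d = 0 := by
      rw [hd, sform_add_right, sform_add_right, sform_self,
        sform_comm b' a, h2, sform_comm b' b, hbb]; decide
    have had' : a + d = b + b' := by
      rw [hd, ← add_assoc, addV_self, zero_add]
    have e1 : Bg g b (b + b') = Bg g b a := by
      have := L1 g gadd hbd had
      rwa [had'] at this
    have e2 : Bg g b' (b + b') = Bg g b' a := by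
      have := L1 g gadd hb'd had
      rwa [had'] at this
    rw [Bshift] at e1
    rw [add_comm b b', Bshift] at e2
    rw [Bsym g a b, ← e1, Bsym g b b', e2, Bsym]

lemma Bstep {a b c d : V n} (hab : sform a b = 1) (hac : sform a c = 1)
    (hcd : sform c d = 1) : Bg g a b = Bg g c d := by
  rw [Bshared g gadd hab hac, Bsym]
  exact Bshared g gadd (by rw [sform_comm]; exact hac) hcd

lemma Bchain {a b c d : V n} (hab : sform a b = 1) (hcd : sform c d = 1) :
    Bg g a b = Bg g c d := by
  rcases z2cases (sform a c) with hac | hac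
  · rcases z2cases (sform a d) with had | had
    · rcases z2cases (sform b c) with hbc | hbc
      · rcases z2cases (sform b d) with hbd | hbd
        · -- all cross pairings orthogonal; go through x = b + d
          set x : V n := b + d with hx
          have hax : sform a x = 1 := by
            rw [hx, sform_add_right, hab, had, add_zero]
          have hcx : sform c x = 1 := by
            rw [hx, sform_add_right, sform_comm c b, hbc, hcd, zero_add]
          have hxc : sform x c = 1 := by rw [sform_comm]; exact hcx
          calc Bg g a b = Bg g a x := Bshared g gadd hab hax
            _ = Bg g x c := by rw [Bsym]; exact Bshared g gadd (by rw [sform_comm]; exact hax) hxc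
            _ = Bg g c d := by rw [Bsym]; exact Bshared g gadd hcx hcd
        · rw [Bsym]
          exact Bstep g gadd (by rw [sform_comm]; exact hab) hbd
            (by rw [sform_comm]; exact hcd) |>.trans (Bsym g d c)
      · rw [Bsym]
        exact Bstep g gadd (by rw [sform_comm]; exact hab) hbc hcd
    · exact (Bstep g gadd hab had (by rw [sform_comm]; exact hcd)).trans (Bsym g d c)
  · exact Bstep g gadd hab hac hcd

end Bstuff

lemma main_aux {n : ℕ} (g : V n → ZMod 2) (h0 : g 0 = 0)
    (gadd : ∀ a b : V n, sform a b = 0 → g (a + b) = g a + g b) :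
    ∃ p : V n, (∀ x, g x = sform p x) ∨ (∀ x, g x = Qf p x) := by
  by_cases hE : ∃ a b : V n, sform a b = 1 ∧ Bg g a b = 1
  · -- quadratic case
    obtain ⟨a₀, b₀, hs₀, hB₀⟩ := hE
    have hfull : ∀ a b : V n, g (a + b) = g a + g b + sform a b := by
      intro a b
      rcases z2cases (sform a b) with hs | hs
      · rw [hs, add_zero]; exact gadd a b hs
      · have : Bg g a b = 1 := by
          rw [Bchain g gadd hs hs₀]; exact hB₀
        unfold Bg at this
        rw [hs]
        have key : ∀ u v w : ZMod 2, u + v + w = 1 → w = u + v + 1 := by decide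
        exact key _ _ _ this
    set h : V n → ZMod 2 := fun x => g x + Q0 x with hh
    have hadd : ∀ x y : V n, h (x + y) = h x + h y := by
      intro x y
      simp only [hh]
      rw [hfull x y, Q0_add]
      have : ∀ u v w t s : ZMod 2, u + v + s + (w + t + s) = u + w + (v + t) := by decide
      exact this _ _ _ _ _
    obtain ⟨p, hp⟩ := linear_rep h hadd
    refine ⟨p, Or.inr fun x => ?_⟩
    have := hp x
    simp only [hh] at this
    unfold Qf
    have key : ∀ u q s : ZMod 2, u + q = s → u = q + s := by decide
    exact key _ _ _ this
  · -- linear case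
    push_neg at hE
    have hadd : ∀ x y : V n, g (x + y) = g x + g y := by
      intro x y
      rcases z2cases (sform x y) with hs | hs
      · exact gadd x y hs
      · have hB := hE x y hs
        rcases z2cases (Bg g x y) with hB0 | hB1
        · unfold Bg at hB0
          have key : ∀ u v w : ZMod 2, u + v + w = 0 → w = u + v := by decide
          exact key _ _ _ hB0
        · exact absurd hB1 hB
    obtain ⟨p, hp⟩ := linear_rep g hadd
    exact ⟨p, Or.inl hp⟩


end Aux

theorem stmt8 (n : ℕ) (hn : 1 ≤ n) (H : Set (V n)) (hH : IsH1 H) :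
    ∃ p : V n, H = Cset p ∨ H = Hset p := by
  classical
  set g : V n → ZMod 2 := fun x => if x ∈ H ∨ x = 0 then 0 else 1 with hg
  have hg0 : g 0 = 0 := by simp [hg]
  have hgH : ∀ x, x ∈ H → g x = 0 := fun x hx => by simp [hg, hx]
  have hgN : ∀ x, x ∉ H → x ≠ 0 → g x = 1 := fun x hx hx0 => by
    simp [hg, hx, hx0]
  have hmem : ∀ x, x ≠ 0 → g x = 0 → x ∈ H := by
    intro x hx0 hgx
    by_contra hx
    rw [hgN x hx hx0] at hgx
    exact one_ne_zero hgx
  have gadd : ∀ a b : V n, sform a b = 0 → g (a + b) = g a + g b := by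
    intro a b hs
    by_cases ha : a = 0
    · subst ha; rw [zero_add, hg0, zero_add]
    by_cases hb : b = 0
    · subst hb; rw [add_zero, hg0, add_zero]
    by_cases hab : a = b
    · subst hab
      rw [addV_self, hg0]
      have : ∀ z : ZMod 2, (0 : ZMod 2) = z + z := by decide
      exact this _
    -- now {a, b, a+b} is a genuine line
    have hl : ({a, b, a + b} : Set (V n)) ∈ Lines n :=
      ⟨a, b, ha, hb, hab, hs, rfl⟩
    have hab0 : a + b ≠ 0 := by
      intro h
      apply hab
      have := congrArg (· + b) h
      simpa [add_assoc, addV_self] using this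
    have haba : a + b ≠ a := by
      intro h
      apply hb
      have := congrArg (a + ·) h
      simpa [← add_assoc, addV_self] using this
    have habb : a + b ≠ b := by
      intro h
      apply ha
      have := congrArg (· + b) h
      simpa [add_assoc, addV_self] using this
    have key : g a + g b + g (a + b) = 0 := by
      rcases hH.2 _ hl with hc | hc
      · obtain ⟨x, hx⟩ := Set.ncard_eq_one.mp hc
        have hxH : x ∈ H := by
          have : x ∈ H ∩ {a, b, a + b} := by rw [hx]; rfl
          exact this.1
        have hxl : x ∈ ({a, b, a + b} : Set (V n)) := by
          have : x ∈ H ∩ {a, b, a + b} := by rw [hx]; rfl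
          exact this.2
        have honly : ∀ y, y ∈ ({a, b, a + b} : Set (V n)) → y ∈ H → y = x := by
          intro y hyl hyH
          have : y ∈ H ∩ {a, b, a + b} := ⟨hyH, hyl⟩
          rw [hx] at this
          exact this
        rcases hxl with h | h | h
        · rw [h] at hxH
          rw [hgH a hxH,
            hgN b (fun hbH => hab ((honly b (by right; left; rfl) hbH).trans h).symm) hb,
            hgN (a + b) (fun hH' => haba ((honly _ (by right; right; rfl) hH').trans h)) hab0]
          decide
        · rw [h] at hxH
          rw [hgH b hxH,
            hgN a (fun haH => hab ((honly a (by left; rfl) haH).trans h)) ha,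
            hgN (a + b) (fun hH' => habb ((honly _ (by right; right; rfl) hH').trans h)) hab0]
          decide
        · rw [h] at hxH
          rw [hgH (a + b) hxH,
            hgN a (fun haH => haba ((honly a (by left; rfl) haH).trans h).symm) ha,
            hgN b (fun hbH => habb ((honly b (by right; left; rfl) hbH).trans h).symm) hb]
          decide
      · rw [hgH a (hc (by left; rfl)), hgH b (hc (by right; left; rfl)),
          hgH (a + b) (hc (by right; right; rfl))]
        decide
    have : ∀ u v w : ZMod 2, u + v + w = 0 → w = u + v := by decide
    exact this _ _ _ key
  obtain ⟨p, hp | hp⟩ := main_aux g hg0 gadd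
  · refine ⟨p, Or.inl ?_⟩
    ext x
    constructor
    · intro hx
      have hx0 : x ≠ 0 := hH.1 hx
      exact ⟨hx0, by rw [← hp x, hgH x hx]⟩
    · rintro ⟨hx0, hsx⟩
      exact hmem x hx0 (by rw [hp x]; exact hsx)
  · refine ⟨p, Or.inr ?_⟩
    ext x
    constructor
    · intro hx
      have hx0 : x ≠ 0 := hH.1 hx
      exact ⟨hx0, by rw [← hp x, hgH x hx]⟩
    · rintro ⟨hx0, hsx⟩
      exact hmem x hx0 (by rw [hp x]; exact hsx)
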